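/- Let H_M be n_M×n and H_E be n_E×n complex matrices with H_M*H_M and H_E*H_E positive definite, and suppose H_M*H_M ≻ H_E*H_E. Then for A* = H_E(H_M*H_M)⁻¹H_M*, the matrix I − AA* = I − H_M(H_M*H_M)⁻¹H_E*H_E(H_M*H_M)⁻¹H_M* is positive definite. -/

import Mathlib

open Matrix
open scoped ComplexOrder

/-- Let H_M be n_M×n and H_E be n_E×n complex matrices with H_M*H_M and H_E*H_E
positive definite, and H_M*H_M ≻ H_E*H_E. Then for A* = H_E(H_M*H_M)⁻¹H_M*
(i.e. A = H_M(H_M*H_M)⁻¹H_E*), the matrix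
I − AA* = I − H_M(H_M*H_M)⁻¹H_E*H_E(H_M*H_M)⁻¹H_M* is positive definite. -/
theorem stmt_4 {n nM nE : ℕ}
    (HM : Matrix (Fin nM) (Fin n) ℂ) (HE : Matrix (Fin nE) (Fin n) ℂ)
    (hM : (HMᴴ * HM).PosDef) (hE : (HEᴴ * HE).PosDef)
    (hME : (HMᴴ * HM - HEᴴ * HE).PosDef) :
    ((1 : Matrix (Fin nM) (Fin nM) ℂ) -
        HM * (HMᴴ * HM)⁻¹ * HEᴴ * HE * (HMᴴ * HM)⁻¹ * HMᴴ).PosDef := by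
  set G := HMᴴ * HM with hGdef
  have hGH : G.IsHermitian := hM.1
  have hGinvH : G⁻¹.IsHermitian := hGH.inv
  have hGu : IsUnit G.det := (Matrix.isUnit_iff_isUnit_det G).1 hM.isUnit
  have hGinvG : G⁻¹ * G = 1 := Matrix.nonsing_inv_mul G hGu
  have hGGinv : G * G⁻¹ = 1 := Matrix.mul_nonsing_inv G hGu
  set C : Matrix (Fin n) (Fin nM) ℂ := G⁻¹ * HMᴴ with hCdef
  have hCH : Cᴴ = HM * G⁻¹ := by
    rw [hCdef, conjTranspose_mul, conjTranspose_conjTranspose, hGinvH.eq]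
  set P : Matrix (Fin nM) (Fin nM) ℂ := Cᴴ * G * C with hPdef
  have hPeq : P = HM * G⁻¹ * HMᴴ := by
    rw [hPdef, hCH, hCdef, Matrix.mul_assoc (HM * G⁻¹) G, ← Matrix.mul_assoc G G⁻¹ HMᴴ,
      hGGinv, Matrix.one_mul]
  have key : (1 : Matrix (Fin nM) (Fin nM) ℂ) - HM * G⁻¹ * HEᴴ * HE * G⁻¹ * HMᴴ
      = (1 - P) + Cᴴ * (G - HEᴴ * HE) * C := by
    rw [Matrix.mul_sub, Matrix.sub_mul, hPdef]
    have : Cᴴ * (HEᴴ * HE) * C = HM * G⁻¹ * HEᴴ * HE * G⁻¹ * HMᴴ := by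
      rw [hCH, hCdef]
      simp only [Matrix.mul_assoc]
    rw [this]
    abel
  have hPherm : P.IsHermitian := isHermitian_conjTranspose_mul_mul C hGH
  have hProjH : (1 - P).IsHermitian := isHermitian_one.sub hPherm
  have hPP : P * P = P := by
    rw [hPeq]
    rw [show HM * G⁻¹ * HMᴴ * (HM * G⁻¹ * HMᴴ)
        = HM * (G⁻¹ * ((HMᴴ * HM) * G⁻¹)) * HMᴴ by simp only [Matrix.mul_assoc]]
    rw [← hGdef, hGGinv, Matrix.mul_one]
  have hProjPSD : (1 - P).PosSemidef := by
    have : (1 - P)ᴴ * (1 - P) = 1 - P := by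
      rw [hProjH.eq, Matrix.mul_sub, Matrix.sub_mul, Matrix.sub_mul, Matrix.one_mul,
        Matrix.one_mul, Matrix.mul_one, hPP]
      abel
    have h := Matrix.posSemidef_conjTranspose_mul_self (1 - P)
    rwa [this] at h
  have hQPSD : (Cᴴ * (G - HEᴴ * HE) * C).PosSemidef :=
    hME.posSemidef.conjTranspose_mul_mul_same C
  rw [key]
  rw [posDef_iff_dotProduct_mulVec]
  constructor
  · exact hProjH.add (isHermitian_conjTranspose_mul_mul C hME.1)
  · intro x hx
    rw [add_mulVec, dotProduct_add]
    by_cases hy : C *ᵥ x = 0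
    · have hPx : P *ᵥ x = 0 := by
        rw [hPdef, ← Matrix.mulVec_mulVec, ← Matrix.mulVec_mulVec, hy, mulVec_zero, mulVec_zero]
      have hQx : (Cᴴ * (G - HEᴴ * HE) * C) *ᵥ x = 0 := by
        rw [← Matrix.mulVec_mulVec, hy, mulVec_zero]
      rw [hQx, dotProduct_zero, add_zero, sub_mulVec, hPx, sub_zero, one_mulVec]
      exact dotProduct_star_self_pos_iff.mpr hx
    · have h1 : 0 ≤ star x ⬝ᵥ (1 - P) *ᵥ x := hProjPSD.dotProduct_mulVec_nonneg x
      have h2 : 0 < star x ⬝ᵥ (Cᴴ * (G - HEᴴ * HE) * C) *ᵥ x := by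
        simpa only [star_mulVec, dotProduct_mulVec, vecMul_vecMul] using
          hME.dotProduct_mulVec_pos hy
      exact add_pos_of_nonneg_of_pos h1 h2
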